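/- Let S = (F_{p^n},+,⋆) be a finite presemifield with x⋆y = F(x,y) additive in each argument, let F_q be a subfield of F_{p^n}, and suppose there exists a field automorphism σ of F_q such that F(x, λy) = σ(λ)·F(x,y) for all x,y ∈ F_{p^n} and all λ ∈ F_q (F is F_q-semilinear in y). Then for every λ ∈ F_q the scalar map t_λ : x ↦ λx belongs to the right-nucleus set N_r(C) = {μ ∈ End_{F_p}(F_{p^n}) : μ∘φ ∈ C for all φ ∈ C}, and every element of N_r(C) is F_q-linear. -/

import Mathlib

set_option maxHeartbeats 1000000
set_option synthInstance.maxHeartbeats 400000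


/-- A finite presemifield of characteristic `p`: multiplication is additive
(equivalently, `ZMod p`-linear) in each argument and has no zero divisors.
For `y`, `mul.flip y` is the right-multiplication map `φ_y : x ↦ x ⋆ y`. -/
structure Presemifield (p : ℕ) (S : Type*) [AddCommGroup S] [Module (ZMod p) S] where
  mul : S →ₗ[ZMod p] S →ₗ[ZMod p] S
  eq_zero_or_eq_zero : ∀ x y : S, mul x y = 0 → x = 0 ∨ y = 0

/-- The spread set `C = {φ_y : y ∈ S}` of a presemifield. -/
def Presemifield.spread {p : ℕ} {S : Type*} [AddCommGroup S] [Module (ZMod p) S]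
    (M : Presemifield p S) : Set (S →ₗ[ZMod p] S) :=
  Set.range M.mul.flip

/-- The right-nucleus set `N_r(D) = {μ : μ∘φ ∈ D for all φ ∈ D}`. -/
def rightNucleusSet {p : ℕ} {S : Type*} [AddCommGroup S] [Module (ZMod p) S]
    (D : Set (S →ₗ[ZMod p] S)) : Set (S →ₗ[ZMod p] S) :=
  {μ | ∀ φ ∈ D, μ ∘ₗ φ ∈ D}

theorem statement9 (p n : ℕ) [Fact p.Prime] (hn : n ≠ 0)
    (M : Presemifield p (GaloisField p n))
    (K : Subfield (GaloisField p n)) (σ : K ≃+* K)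
    (hσ : ∀ (l : K) (x y : GaloisField p n),
      M.mul x ((l : GaloisField p n) * y) = (σ l : GaloisField p n) * M.mul x y) :
    (∀ l : K, LinearMap.mulLeft (ZMod p) (l : GaloisField p n) ∈
      rightNucleusSet M.spread) ∧
    (∀ μ ∈ rightNucleusSet M.spread, ∀ (l : K) (x : GaloisField p n),
      μ ((l : GaloisField p n) * x) = (l : GaloisField p n) * μ x) := by
  classical
  -- part 1
  have part1 : ∀ l : K, LinearMap.mulLeft (ZMod p) (l : GaloisField p n) ∈ rightNucleusSet M.spread := by
    intro l φ hφ
    obtain ⟨y, rfl⟩ := hφ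
    refine ⟨(σ.symm l : GaloisField p n) * y, ?_⟩
    ext x
    simp only [LinearMap.flip_apply, LinearMap.comp_apply, LinearMap.mulLeft_apply]
    rw [show ((σ.symm l : K) : GaloisField p n) * y = ((σ.symm l : GaloisField p n)) * y from rfl, hσ, σ.apply_symm_apply]
  refine ⟨part1, ?_⟩
  -- injectivity of φ_y for y ≠ 0
  have phi_inj : ∀ y : GaloisField p n, y ≠ 0 → Function.Injective (M.mul.flip y) := by
    intro y hy x1 x2 h
    have h0 : M.mul (x1 - x2) y = 0 := by
      simp only [map_sub, LinearMap.sub_apply]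
      simpa [LinearMap.flip_apply] using sub_eq_zero_of_eq h
    rcases M.eq_zero_or_eq_zero _ _ h0 with h' | h'
    · exact sub_eq_zero.mp h'
    · exact absurd h' hy
  have phi_surj : ∀ y : GaloisField p n, y ≠ 0 → Function.Surjective (M.mul.flip y) := fun y hy =>
    (Finite.injective_iff_surjective).mp (phi_inj y hy)
  -- injectivity of nonzero nucleus elements
  have muInj : ∀ μ ∈ rightNucleusSet M.spread, μ ≠ 0 → Function.Injective μ := by
    intro μ hμ hμ0
    rw [← LinearMap.ker_eq_bot, LinearMap.ker_eq_bot']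
    intro z hz
    by_contra hz0
    obtain ⟨y0, hy0⟩ := exists_ne (0 : GaloisField p n)
    obtain ⟨x, hx⟩ := phi_surj y0 hy0 z
    obtain ⟨w, hw⟩ := hμ _ ⟨y0, rfl⟩
    have hxne : x ≠ 0 := by
      rintro rfl; exact hz0 (by simpa using hx.symm)
    have hxw : M.mul x w = 0 := by
      have := congrFun (congrArg DFunLike.coe hw) x
      simpa [LinearMap.flip_apply, hx, hz] using this
    have hw0 : w = 0 := by
      rcases M.eq_zero_or_eq_zero _ _ hxw with h' | h'
      · exact absurd h' hxne
      · exact h'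
    subst hw0
    apply hμ0
    ext v
    obtain ⟨u, hu⟩ := phi_surj y0 hy0 v
    have := congrFun (congrArg DFunLike.coe hw) u
    simp only [LinearMap.comp_apply] at this
    simpa [hu] using this.symm
  -- the right nucleus as a subalgebra of Module.End
  let N : Subalgebra (ZMod p) (Module.End (ZMod p) (GaloisField p n)) :=
  { carrier := rightNucleusSet M.spread
    mul_mem' := by
      intro a b ha hb φ hφ
      have := ha _ (hb φ hφ)
      simpa [Module.End.mul_eq_comp, LinearMap.comp_assoc] using this
    add_mem' := by
      intro a b ha hb φ hφ
      obtain ⟨ya, hya⟩ := ha φ hφ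
      obtain ⟨yb, hyb⟩ := hb φ hφ
      refine ⟨ya + yb, ?_⟩
      rw [map_add, hya, hyb, LinearMap.add_comp]
    algebraMap_mem' := by
      intro c φ hφ
      obtain ⟨y, rfl⟩ := hφ
      refine ⟨c • y, ?_⟩
      ext x
      simp [Module.algebraMap_end_apply] }
  haveI : Finite (Module.End (ZMod p) (GaloisField p n)) :=
    Finite.of_injective (fun f => (f : GaloisField p n → GaloisField p n)) DFunLike.coe_injective
  haveI : Finite N := Subtype.finite
  haveI : Nontrivial N := by
    refine ⟨1, 0, fun h => ?_⟩
    obtain ⟨x, hx⟩ := exists_ne (0 : GaloisField p n)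
    have : (1 : Module.End (ZMod p) (GaloisField p n)) = 0 := congrArg Subtype.val h
    exact hx (by simpa using congrFun (congrArg DFunLike.coe this) x)
  haveI : NoZeroDivisors N := by
    constructor
    intro a b hab
    by_cases ha : a = 0
    · exact Or.inl ha
    right
    have hainj : Function.Injective (a : Module.End (ZMod p) (GaloisField p n)) := by
      apply muInj _ a.2
      exact fun h => ha (Subtype.ext h)
    ext x
    have : (a : Module.End (ZMod p) (GaloisField p n)) ((b : Module.End (ZMod p) (GaloisField p n)) x) = 0 := by
      have := congrArg Subtype.val hab
      have := congrFun (congrArg DFunLike.coe this) x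
      simpa using this
    have hb0 : (b : Module.End (ZMod p) (GaloisField p n)) x = 0 :=
      hainj (show (a : Module.End (ZMod p) (GaloisField p n)) ((b : Module.End (ZMod p) (GaloisField p n)) x)
          = (a : Module.End (ZMod p) (GaloisField p n)) 0 by simpa using this)
    simpa using hb0
  haveI : IsDomain N := NoZeroDivisors.to_isDomain N
  have hfield := Finite.isDomain_to_isField N
  -- part 2: commutativity
  intro μ hμ l x
  have hl : LinearMap.mulLeft (ZMod p) (l : GaloisField p n) ∈ rightNucleusSet M.spread := part1 l
  have hcomm := hfield.mul_comm ⟨μ, hμ⟩ ⟨LinearMap.mulLeft (ZMod p) (l : GaloisField p n), hl⟩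
  have : μ ∘ₗ LinearMap.mulLeft (ZMod p) (l : GaloisField p n)
      = LinearMap.mulLeft (ZMod p) (l : GaloisField p n) ∘ₗ μ := by
    have := congrArg Subtype.val hcomm
    simpa [Module.End.mul_eq_comp] using this
  have := congrFun (congrArg DFunLike.coe this) x
  simpa using this
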